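/- For any rack X, the first projection p₁ : Inn̄(X) → ℤ^{⊕O_X} induces an isomorphism from the abelianization of Inn̄(X) onto the free abelian group ℤ^{⊕O_X}. -/

import Mathlib

/-!  Core framework: racks/quandles with right operation, inner automorphism group
(with opposite composition, acting on the right), associated group. -/

universe u v

noncomputable section

/-- A rack: a set with a right-distributive binary operation whose right
translations are bijective. -/
structure RackStr (X : Type u) where
  op : X → X → X
  bij : ∀ y, Function.Bijective fun x => op x y
  distrib : ∀ x y z, op (op x y) z = op (op x z) (op y z)

/-- A quandle: a rack which is idempotent. -/
structure QuandleStr (X : Type u) extends RackStr X where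
  idem : ∀ x, op x x = x

namespace RackStr

variable {X : Type u} (R : RackStr X)

/-- The right translation `s_y : x ↦ x * y`, as a permutation. -/
def s (y : X) : Equiv.Perm X := Equiv.ofBijective _ (R.bij y)

@[simp] lemma s_apply (y x : X) : R.s y x = R.op x y := rfl

/-- The right translation, as an element of the opposite of the permutation group
(the inner automorphism group is equipped with the *opposite* composition,
so that it acts on `X` on the right). -/
def sop (y : X) : (Equiv.Perm X)ᵐᵒᵖ := MulOpposite.op (R.s y)

/-- The inner automorphism group `Inn(X)`: the subgroup (of the permutation
group with opposite multiplication) generated by the right translations. -/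
def Inn : Subgroup (Equiv.Perm X)ᵐᵒᵖ := Subgroup.closure (Set.range R.sop)

/-- The relations defining the associated group `As(X)`. -/
def rels : Set (FreeGroup X) :=
  { r | ∃ x y, r = FreeGroup.of x * FreeGroup.of y *
      (FreeGroup.of y * FreeGroup.of (R.op x y))⁻¹ }

/-- The associated group `As(X) = ⟨e_x (x ∈ X) ∣ e_x e_y = e_y e_{x*y}⟩`. -/
def As : Type u := PresentedGroup R.rels

instance : Group R.As := by unfold As; infer_instance

/-- The generator `e_x` of the associated group. -/
def e (x : X) : R.As := PresentedGroup.of x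

lemma sop_rel (x y : X) : R.sop x * R.sop y = R.sop y * R.sop (R.op x y) := by
  unfold sop
  rw [← MulOpposite.op_mul, ← MulOpposite.op_mul]
  congr 1
  ext a
  simp only [Equiv.Perm.mul_apply, s_apply]
  exact R.distrib a x y

/-- The canonical homomorphism `ψ` from the associated group, sending `e_x` to
`s_x`; its image is the inner automorphism group `Inn(X)`. -/
def psi : R.As →* (Equiv.Perm X)ᵐᵒᵖ :=
  PresentedGroup.toGroup (f := R.sop) (by
    rintro r ⟨x, y, rfl⟩
    rw [map_mul, map_mul, map_inv, map_mul]
    simp only [FreeGroup.lift_apply_of]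
    rw [mul_inv_eq_one]
    exact R.sop_rel x y)

@[simp] lemma psi_e (x : X) : R.psi (R.e x) = R.sop x :=
  PresentedGroup.toGroup.of _

/-- The right action of the associated group on `X` (through `ψ`). -/
def act (x : X) (g : R.As) : X := (R.psi g).unop x

@[simp] lemma act_one (x : X) : R.act x 1 = x := by simp [act]

lemma act_mul (x : X) (g h : R.As) : R.act x (g * h) = R.act (R.act x g) h := by
  simp [act, map_mul]

@[simp] lemma act_e (x y : X) : R.act x (R.e y) = R.op x y := by
  simp [act, sop]

/-- The orbit equivalence relation of the action of the inner automorphism group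
(equivalently, of the associated group) on `X`. -/
def orbSetoid : Setoid X where
  r a b := ∃ g : R.As, R.act a g = b
  iseqv := by
    constructor
    · exact fun a => ⟨1, by simp⟩
    · rintro a b ⟨g, rfl⟩
      exact ⟨g⁻¹, by rw [← R.act_mul, mul_inv_cancel, act_one]⟩
    · rintro a b c ⟨g, rfl⟩ ⟨h, rfl⟩
      exact ⟨g * h, R.act_mul a g h⟩

/-- The set of orbits (connected components) `O_X`. -/
def Orbits : Type u := Quotient R.orbSetoid

/-- The orbit of a point. -/
def orb (x : X) : R.Orbits := Quotient.mk R.orbSetoid x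

lemma orb_op (x y : X) : R.orb (R.op x y) = R.orb x :=
  (Quot.sound ⟨R.e y, by simp⟩).symm

/-- The abelianization homomorphism `α : As(X) → ℤ^{⊕ O_X}`, sending `e_x` to the
basis element indexed by the orbit of `x`. -/
def alpha : R.As →* Multiplicative (R.Orbits →₀ ℤ) :=
  PresentedGroup.toGroup
    (f := fun x => Multiplicative.ofAdd (Finsupp.single (R.orb x) 1)) (by
    rintro r ⟨x, y, rfl⟩
    rw [map_mul, map_mul, map_inv, map_mul]
    simp only [FreeGroup.lift_apply_of]
    rw [mul_inv_eq_one, R.orb_op x y, mul_comm])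

@[simp] lemma alpha_e (x : X) :
    R.alpha (R.e x) = Multiplicative.ofAdd (Finsupp.single (R.orb x) 1) :=
  PresentedGroup.toGroup.of _

/-- `α × ψ`. -/
def alphaPsi : R.As →* Multiplicative (R.Orbits →₀ ℤ) × (Equiv.Perm X)ᵐᵒᵖ :=
  R.alpha.prod R.psi

/-- `Inn̄(X)`, the image of `α × ψ`. -/
def InnBar : Subgroup (Multiplicative (R.Orbits →₀ ℤ) × (Equiv.Perm X)ᵐᵒᵖ) :=
  R.alphaPsi.range

/-- `s̄_x = (α × ψ)(e_x)` as an element of `Inn̄(X)`. -/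
def sbar (x : X) : R.InnBar := ⟨R.alphaPsi (R.e x), ⟨R.e x, rfl⟩⟩

/-- The group homomorphism `ε : As(X) → ℤ` sending every generator to `1`. -/
def epsAs : R.As →* Multiplicative ℤ :=
  PresentedGroup.toGroup (f := fun _ => Multiplicative.ofAdd (1 : ℤ)) (by
    rintro r ⟨x, y, rfl⟩
    rw [map_mul, map_mul, map_inv, map_mul]
    simp only [FreeGroup.lift_apply_of]
    rw [mul_inv_eq_one])

@[simp] lemma epsAs_e (x : X) : R.epsAs (R.e x) = Multiplicative.ofAdd (1 : ℤ) :=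
  PresentedGroup.toGroup.of _

/-- `ε × ψ`. -/
def epsPsi : R.As →* Multiplicative ℤ × (Equiv.Perm X)ᵐᵒᵖ :=
  R.epsAs.prod R.psi

/-- The augmentation `ε₀ : ℤ^{⊕ O_X} → ℤ` sending each basis element to `1`. -/
def eps0 : (R.Orbits →₀ ℤ) →+ ℤ :=
  Finsupp.liftAddHom fun _ => AddMonoidHom.id ℤ

/-- `ε̄` on the ambient group `ℤ^{⊕ O_X} × Perm(X)ᵐᵒᵖ`: the composite of the first
projection with `ε₀`.  `Inn̄₀(X)` is `Inn̄(X) ∩ Ker ε̄`. -/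
def epsBar : Multiplicative (R.Orbits →₀ ℤ) × (Equiv.Perm X)ᵐᵒᵖ →* Multiplicative ℤ :=
  (AddMonoidHom.toMultiplicative R.eps0).comp (MonoidHom.fst _ _)

end RackStr

/-- The subgroup of (the opposite of) the permutation group consisting of the
permutations fixing `x`. -/
def fixedSub {X : Type u} (x : X) : Subgroup (Equiv.Perm X)ᵐᵒᵖ where
  carrier := { σ | σ.unop x = x }
  one_mem' := rfl
  mul_mem' := by
    intro a b ha hb
    simp only [Set.mem_setOf_eq, MulOpposite.unop_mul, Equiv.Perm.mul_apply] at *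
    rw [ha, hb]
  inv_mem' := by
    intro a ha
    simp only [Set.mem_setOf_eq, MulOpposite.unop_inv] at *
    conv_lhs => rw [← ha]
    exact Equiv.symm_apply_apply _ _

namespace RackStr

variable {X : Type u} (R : RackStr X)

/-- The stabilizer of `x ∈ X` in the associated group. -/
def stabAs (x : X) : Subgroup R.As := Subgroup.comap R.psi (fixedSub x)

lemma mem_stabAs {x : X} {g : R.As} : g ∈ R.stabAs x ↔ R.act x g = x := Iff.rfl

/-- `X` is (algebraically) connected when the inner automorphism group acts
transitively, equivalently when the associated group does. -/
def IsConnected : Prop := ∀ x y : X, ∃ g : R.As, R.act x g = y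

/-- `Inn₀(X) = ψ(Ker ε)`, the image under `ψ` of the kernel of `ε`
(equivalently, the image of `Inn̄₀(X)` under the second projection). -/
def Inn0 : Subgroup (Equiv.Perm X)ᵐᵒᵖ := Subgroup.map R.psi R.epsAs.ker

end RackStr


namespace RackStr

variable {X : Type u} (R : RackStr X)

/-- The quotient map `FreeGroup X →* As(X)`. -/
def mkAs : FreeGroup X →* R.As := PresentedGroup.mk R.rels

@[simp] lemma mkAs_of (x : X) : R.mkAs (FreeGroup.of x) = R.e x := rfl

lemma mkAs_surjective : Function.Surjective R.mkAs := fun g =>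
  QuotientGroup.induction_on g (fun w => ⟨w, rfl⟩)

lemma e_rel' (x y : X) : R.e x * R.e y = R.e y * R.e (R.op x y) := by
  have h : R.mkAs (FreeGroup.of x * FreeGroup.of y *
      (FreeGroup.of y * FreeGroup.of (R.op x y))⁻¹) = 1 := by
    show QuotientGroup.mk _ = 1
    exact (QuotientGroup.eq_one_iff _).mpr
      (Subgroup.subset_normalClosure ⟨x, y, rfl⟩)
  rw [map_mul, map_inv, map_mul, map_mul, mul_inv_eq_one, mkAs_of, mkAs_of, mkAs_of] at h
  exact h

lemma e_op (x y : X) : R.e (R.op x y) = (R.e y)⁻¹ * R.e x * R.e y := by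
  rw [mul_assoc, R.e_rel' x y, inv_mul_cancel_left]

lemma e_act (g : R.As) (x : X) : R.e (R.act x g) = g⁻¹ * R.e x * g := by
  obtain ⟨w, rfl⟩ := R.mkAs_surjective g
  induction w using FreeGroup.induction_on generalizing x with
  | C1 => simp
  | of y =>
    show R.e (R.act x (R.mkAs (FreeGroup.of y))) =
      (R.mkAs (FreeGroup.of y))⁻¹ * R.e x * R.mkAs (FreeGroup.of y)
    rw [mkAs_of, R.act_e x y]
    exact R.e_op x y
  | inv_of y _ =>
    show R.e (R.act x (R.mkAs (FreeGroup.of y)⁻¹)) =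
      (R.mkAs (FreeGroup.of y)⁻¹)⁻¹ * R.e x * R.mkAs (FreeGroup.of y)⁻¹
    rw [map_inv, mkAs_of]
    set x' := R.act x (R.e y)⁻¹ with hx'
    have hxx : R.op x' y = x := by
      rw [← R.act_e x' y, hx', ← R.act_mul, inv_mul_cancel, R.act_one]
    have h := R.e_op x' y
    rw [hxx] at h
    rw [h]
    group
  | mul u v hu hv =>
    rw [map_mul, R.act_mul, hv, hu]
    group

/-- The canonical map `As(X) → Abelianization Inn̄(X)`. -/
def toAb : R.As →* Abelianization R.InnBar :=
  (Abelianization.of).comp R.alphaPsi.rangeRestrict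

lemma toAb_e_eq {x y : X} (h : R.orb x = R.orb y) : R.toAb (R.e x) = R.toAb (R.e y) := by
  obtain ⟨g, rfl⟩ : ∃ g : R.As, R.act x g = y := Quotient.exact h
  rw [R.e_act g x, map_mul, map_mul, map_inv,
    mul_comm ((R.toAb g)⁻¹) (R.toAb (R.e x)), mul_assoc, inv_mul_cancel, mul_one]

/-- For each orbit, the common image of its generators in the abelianization. -/
def cOrb : R.Orbits → Additive (Abelianization R.InnBar) :=
  Quotient.lift (fun x => Additive.ofMul (R.toAb (R.e x))) (fun a b hab => by
    have : R.orb a = R.orb b := Quotient.sound hab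
    exact congrArg Additive.ofMul (R.toAb_e_eq this))

/-- The inverse map `ℤ^{⊕O_X} → Abelianization Inn̄(X)`. -/
def beta : Multiplicative (R.Orbits →₀ ℤ) →* Abelianization R.InnBar :=
  AddMonoidHom.toMultiplicativeLeft
    (Finsupp.liftAddHom (fun q => zmultiplesHom _ (R.cOrb q)))

lemma beta_single (x : X) :
    R.beta (Multiplicative.ofAdd (Finsupp.single (R.orb x) 1)) = R.toAb (R.e x) := by
  show Additive.toMul (Finsupp.liftAddHom (fun q => zmultiplesHom _ (R.cOrb q))
    (Finsupp.single (R.orb x) 1)) = _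
  rw [Finsupp.liftAddHom_apply_single, zmultiplesHom_apply, one_zsmul]
  rfl

lemma beta_alpha (g : R.As) : R.beta (R.alpha g) = R.toAb g := by
  have : R.beta.comp R.alpha = R.toAb := by
    apply PresentedGroup.ext
    intro x
    show R.beta (R.alpha (R.e x)) = R.toAb (R.e x)
    rw [R.alpha_e, R.beta_single]
  exact DFunLike.congr_fun this g

end RackStr


/-- For any rack `X`, the first projection `p₁ : Inn̄(X) → ℤ^{⊕O_X}`
induces an isomorphism from the abelianization of `Inn̄(X)` onto `ℤ^{⊕O_X}`. -/
theorem abelianization_innbar (X : Type u) (R : RackStr X) :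
    Function.Bijective
      (Abelianization.lift ((MonoidHom.fst _ _).comp R.InnBar.subtype)) := by
  set L := Abelianization.lift ((MonoidHom.fst _ _).comp R.InnBar.subtype) with hL
  have L_toAb : ∀ g : R.As, L (R.toAb g) = R.alpha g := fun g => rfl
  have hLβ : ∀ a, L (R.beta a) = a := by
    intro a
    have : ∀ s : R.Orbits →₀ ℤ,
        L (R.beta (Multiplicative.ofAdd s)) = Multiplicative.ofAdd s := by
      intro s
      induction s using Finsupp.induction with
      | zero => simp [map_one]
      | single_add q n s _ _ ih =>
        rw [ofAdd_add, map_mul, map_mul, ih]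
        congr 1
        obtain ⟨x, rfl⟩ : ∃ x : X, R.orb x = q := by
          obtain ⟨x⟩ := q
          exact ⟨x, rfl⟩
        have hsingle : (Finsupp.single (R.orb x) n : R.Orbits →₀ ℤ)
            = n • Finsupp.single (R.orb x) (1 : ℤ) := by
          rw [Finsupp.smul_single, smul_eq_mul, mul_one]
        rw [hsingle, ofAdd_zsmul, map_zpow, map_zpow, R.beta_single, L_toAb, R.alpha_e]
    have ha : a = Multiplicative.ofAdd a.toAdd := rfl
    rw [ha]; exact this _
  have hβL : ∀ a, R.beta (L a) = a := by
    intro a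
    refine QuotientGroup.induction_on a ?_
    intro i
    ·
      obtain ⟨g, hg⟩ := i.2
      have hi : i = R.alphaPsi.rangeRestrict g := by
        apply Subtype.ext
        exact hg.symm
      have hL1 : L (Abelianization.of i) = R.alpha g := by
        rw [hi]; exact L_toAb g
      show R.beta (L (Abelianization.of i)) = Abelianization.of i
      rw [hL1, R.beta_alpha, hi]
      rfl
  exact ⟨Function.LeftInverse.injective hβL, Function.RightInverse.surjective hLβ⟩
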